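/- arXiv:0812.4920 — 6 statements merged into one kernel-verified Lean document; each statement's English description precedes it below -/
import Mathlib

section
/- Let (H, L, t) be a list coloring problem, let G be a subgraph of H, let A = ⋃_{p ∈ V(G)} L_p and suppose |A| = k ≤ t. Suppose there exists a map c : V(G) → {1,…,k} such that for every solution τ of the list coloring problem (G, L|_{V(G)}, t) and all p, q ∈ V(G), τ(p) = τ(q) if and only if c(p) = c(q). Let v ∈ V(H) ∖ V(G) be a vertex such that for every j ∈ {1,…,k} some neighbor of v in H belongs to c^{-1}(j). Then every solution σ of (H, L, t) satisfies σ(v) ∉ A; consequently, the list coloring problems (H, L, t) and (H, L', t), where L'_v = L_v ∖ A and L'_w = L_w for all w ≠ v, have exactly the same solutions. -/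
/-- Soundness of *type 1 forcing*.  `H` is a graph with lists `L`, `G ≤ H` is a
subgraph with vertex set `S`, `A = ⋃_{p ∈ S} L p` has `k ≤ t` elements, and the list
coloring problem on `G` has a unique solution up to permutation of colors, its color
classes being described by `c : V → Fin k`.  If `v ∉ S` has, for every class `j`, a
neighbour (in `H`) lying in class `j`, then every solution `σ` of `(H, L, t)` has
`σ v ∉ A`, and removing `A` from the list of `v` does not change the solution set. -/
theorem stmt1 {V : Type*} [Fintype V] [DecidableEq V]
    (H G : SimpleGraph V) (t k : ℕ) (L : V → Finset (Fin t))
    (S : Finset V) (hGH : G ≤ H)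
    (hGS : ∀ a b, G.Adj a b → a ∈ S ∧ b ∈ S)
    (hA : (S.biUnion L).card = k) (hkt : k ≤ t)
    (c : V → Fin k)
    (hc : ∀ τ : V → Fin t,
      (∀ p q, G.Adj p q → τ p ≠ τ q) → (∀ p ∈ S, τ p ∈ L p) →
      ∀ p ∈ S, ∀ q ∈ S, (τ p = τ q ↔ c p = c q))
    (v : V) (hv : v ∉ S)
    (hnb : ∀ j : Fin k, ∃ p ∈ S, H.Adj v p ∧ c p = j) :
    (∀ σ : V → Fin t,
        (∀ a b, H.Adj a b → σ a ≠ σ b) → (∀ w, σ w ∈ L w) →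
        σ v ∉ S.biUnion L) ∧
    (∀ σ : V → Fin t,
        ((∀ a b, H.Adj a b → σ a ≠ σ b) ∧ ∀ w, σ w ∈ L w) ↔
        ((∀ a b, H.Adj a b → σ a ≠ σ b) ∧
          ∀ w, σ w ∈ (if w = v then L v \ S.biUnion L else L w))) := by

  have main : ∀ σ : V → Fin t,
      (∀ a b, H.Adj a b → σ a ≠ σ b) → (∀ w, σ w ∈ L w) →
      σ v ∉ S.biUnion L := by
    intro σ hprop hL hmem
    have hG : ∀ p q, G.Adj p q → σ p ≠ σ q := fun p q h => hprop p q (hGH h)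
    have hc' := hc σ hG (fun p _ => hL p)
    choose p hpS hadj hcp using hnb
    have hinj : Function.Injective (fun j => σ (p j)) := by
      intro i j hij
      have := (hc' (p i) (hpS i) (p j) (hpS j)).1 hij
      rwa [hcp, hcp] at this
    set f : Fin k → Fin t := fun j => σ (p j) with hf
    have hsub : Finset.univ.image f ⊆ S.biUnion L := by
      intro x hx
      simp only [Finset.mem_image] at hx
      obtain ⟨j, _, rfl⟩ := hx
      exact Finset.mem_biUnion.2 ⟨p j, hpS j, hL (p j)⟩
    have hcard : (Finset.univ.image f).card = k := by
      rw [Finset.card_image_of_injective _ hinj, Finset.card_univ, Fintype.card_fin]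
    have heq : Finset.univ.image f = S.biUnion L :=
      Finset.eq_of_subset_of_card_le hsub (by rw [hcard, hA])
    rw [← heq] at hmem
    obtain ⟨j, _, hj⟩ := Finset.mem_image.1 hmem
    exact hprop v (p j) (hadj j) hj.symm
  refine ⟨main, fun σ => ⟨fun ⟨h1, h2⟩ => ⟨h1, fun w => ?_⟩, fun ⟨h1, h2⟩ => ⟨h1, fun w => ?_⟩⟩⟩
  · split
    · next h => rw [h]; exact Finset.mem_sdiff.2 ⟨h2 v, main σ h1 h2⟩
    · exact h2 w
  · have h := h2 w
    split at h
    · next he => subst he; exact (Finset.mem_sdiff.1 h).1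
    · exact h
end

section
/- Let (M, L, l) be a list coloring problem, let H be an induced subgraph of M with chromatic number t, and suppose the union ⋃_{w ∈ V(H)} L_w has at most t elements. Let V* ⊆ V(H) be a set such that in every proper coloring of H using exactly t colors, V* is one of the color classes. Then every solution σ of (M, L, l) is constant on V*, its common value on V* belongs to ⋂_{w ∈ V*} L_w, and the list coloring problems (M, L, l) and (M, L', l), where L'_w = ⋂_{p ∈ V*} L_p for w ∈ V* and L'_w = L_w otherwise, have exactly the same solutions. -/
/-- Soundness of *type 2 forcing*.  `(M, L, l)` is a list coloring problem, `H` is the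
induced subgraph of `M` on the vertex set `S`, the chromatic number of `H` is `t`, the
union of the lists of vertices of `H` has at most `t` elements, and `Vs ⊆ S` is a set
which is a color class in every proper coloring of `H` using exactly `t` colors.
Then every solution `σ` of `(M, L, l)` is constant on `Vs` with common value in
`⋂_{w ∈ Vs} L w`, and replacing the lists on `Vs` by this intersection does not change
the solution set. -/
theorem stmt2 {V : Type*} [Fintype V] [DecidableEq V]
    (M : SimpleGraph V) (l t : ℕ) (L : V → Finset (Fin l))
    (S : Finset V)
    (hchi : (M.induce (↑S : Set V)).chromaticNumber = (t : ℕ∞))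
    (hA : (S.biUnion L).card ≤ t)
    (Vs : Finset V) (hVs : Vs ⊆ S)
    (hclass : ∀ c : V → Fin t,
      (∀ a ∈ S, ∀ b ∈ S, M.Adj a b → c a ≠ c b) →
      (∀ j : Fin t, ∃ w ∈ S, c w = j) →
      ∃ j : Fin t, ∀ w ∈ S, (w ∈ Vs ↔ c w = j)) :
    (∀ σ : V → Fin l,
        (∀ a b, M.Adj a b → σ a ≠ σ b) → (∀ w, σ w ∈ L w) →
        (∀ w ∈ Vs, ∀ w' ∈ Vs, σ w = σ w') ∧ (∀ w ∈ Vs, σ w ∈ Vs.inf L)) ∧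
    (∀ σ : V → Fin l,
        ((∀ a b, M.Adj a b → σ a ≠ σ b) ∧ ∀ w, σ w ∈ L w) ↔
        ((∀ a b, M.Adj a b → σ a ≠ σ b) ∧
          ∀ w, σ w ∈ (if w ∈ Vs then Vs.inf L else L w))) := by
  classical
  have key : ∀ σ : V → Fin l, (∀ a b, M.Adj a b → σ a ≠ σ b) → (∀ w, σ w ∈ L w) →
      ∀ w ∈ Vs, ∀ w' ∈ Vs, σ w = σ w' := by
    intro σ hprop hL w hw w' hw'
    set T : Finset (Fin l) := S.image σ with hT
    have hTsub : T ⊆ S.biUnion L := by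
      intro x hx
      rcases Finset.mem_image.mp hx with ⟨a, ha, rfl⟩
      exact Finset.mem_biUnion.mpr ⟨a, ha, hL a⟩
    have hcard_le : T.card ≤ t := le_trans (Finset.card_le_card hTsub) hA
    have col : (M.induce (↑S : Set V)).Coloring ↥T :=
      SimpleGraph.Coloring.mk
        (fun v => ⟨σ v, Finset.mem_image.mpr ⟨v, by exact_mod_cast v.2, rfl⟩⟩)
        (by
          intro a b hab hEq
          exact hprop a b hab (by simpa using congrArg Subtype.val hEq))
    have hcol : (M.induce (↑S : Set V)).Colorable T.card := by
      simpa [Fintype.card_coe] using col.colorable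
    have hle : (t : ℕ∞) ≤ (T.card : ℕ) := hchi ▸ hcol.chromaticNumber_le
    have ht : T.card = t := le_antisymm hcard_le (by exact_mod_cast hle)
    have e : ↥T ≃ Fin t := T.equivFinOfCardEq ht
    have hmemT : ∀ u ∈ S, σ u ∈ T := fun u hu => Finset.mem_image.mpr ⟨u, hu, rfl⟩
    set c : V → Fin t := fun u =>
      if h : σ u ∈ T then e ⟨σ u, h⟩ else e ⟨σ w, hmemT w (hVs hw)⟩ with hc
    have hcS : ∀ u (hu : u ∈ S), c u = e ⟨σ u, hmemT u hu⟩ := by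
      intro u hu
      simp [hc, dif_pos (hmemT u hu)]
    have hproper : ∀ a ∈ S, ∀ b ∈ S, M.Adj a b → c a ≠ c b := by
      intro a ha b hb hab hEq
      rw [hcS a ha, hcS b hb] at hEq
      have := e.injective hEq
      exact hprop a b hab (by simpa using congrArg Subtype.val this)
    have hsurj : ∀ j : Fin t, ∃ u ∈ S, c u = j := by
      intro j
      obtain ⟨u, hu, huv⟩ := Finset.mem_image.mp (e.symm j).2
      refine ⟨u, hu, ?_⟩
      rw [hcS u hu]
      have : (⟨σ u, hmemT u hu⟩ : ↥T) = e.symm j := Subtype.ext huv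
      rw [this, Equiv.apply_symm_apply]
    obtain ⟨j, hj⟩ := hclass c hproper hsurj
    have h1 : c w = j := (hj w (hVs hw)).mp hw
    have h2 : c w' = j := (hj w' (hVs hw')).mp hw'
    have : c w = c w' := h1.trans h2.symm
    rw [hcS w (hVs hw), hcS w' (hVs hw')] at this
    simpa using congrArg Subtype.val (e.injective this)
  have mem_inf : ∀ σ : V → Fin l, (∀ a b, M.Adj a b → σ a ≠ σ b) → (∀ w, σ w ∈ L w) →
      ∀ w ∈ Vs, σ w ∈ Vs.inf L := by
    intro σ hp hL w hw
    rw [Finset.mem_inf]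
    intro i hi
    rw [key σ hp hL w hw i hi]
    exact hL i
  refine ⟨fun σ hp hL => ⟨key σ hp hL, mem_inf σ hp hL⟩, fun σ => ⟨?_, ?_⟩⟩
  · rintro ⟨hp, hL⟩
    refine ⟨hp, fun w => ?_⟩
    split_ifs with h
    · exact mem_inf σ hp hL w h
    · exact hL w
  · rintro ⟨hp, hL'⟩
    refine ⟨hp, fun w => ?_⟩
    have := hL' w
    split_ifs at this with h
    · exact Finset.inf_le (f := L) h this
    · exact this
end

section
/- Let H be a t-chromatic finite simple graph such that in every proper t-coloring of H the set V* = {v_1, …, v_m} (m ≥ 1) is a color class, and let G = H − V* be the induced subgraph on V(H) ∖ V*. Then the chromatic number of G equals t−1, and the list F = {(i, W_i) : 1 ≤ i ≤ m}, where W_i = N_H(v_i) is the neighborhood of v_i in H, satisfies: (i) for every proper (t−1)-coloring of G, every W_i has nonempty intersection with all color classes, and (ii) for every surjective proper t-coloring of G, some W_i has nonempty intersection with all color classes; that is, F is a transverse system for G. -/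
/-- Theorem A (part a) of the paper.  If `H` is a `t`-chromatic graph in which the
nonempty set `Vs = {v₁, …, v_m}` is a color class of every proper `t`-coloring, and
`G = H − Vs`, then `χ(G) = t − 1` and the family `F = {(i, N_H(vᵢ)) : vᵢ ∈ Vs}` is a
transverse system for `G`:
(i) in every proper `(t−1)`-coloring of `G` every `N_H(vᵢ)` meets every color class, and
(ii) in every surjective proper `t`-coloring of `G` some `N_H(vᵢ)` meets every color
class. -/
theorem stmt3 {V : Type*} [Fintype V] (H : SimpleGraph V) (t : ℕ) (ht : 1 ≤ t)
    (Vs : Finset V) (hne : Vs.Nonempty)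
    (hchi : H.chromaticNumber = (t : ℕ∞))
    (hclass : ∀ c : V → Fin t, (∀ a b, H.Adj a b → c a ≠ c b) →
      ∃ j : Fin t, ∀ w, w ∈ Vs ↔ c w = j) :
    (H.induce {w : V | w ∉ Vs}).chromaticNumber = ((t - 1 : ℕ) : ℕ∞) ∧
    (∀ σ : V → Fin (t - 1),
      (∀ a b, a ∉ Vs → b ∉ Vs → H.Adj a b → σ a ≠ σ b) →
      ∀ vi ∈ Vs, ∀ j : Fin (t - 1),
        (∃ w, w ∉ Vs ∧ σ w = j) → ∃ w, w ∉ Vs ∧ H.Adj vi w ∧ σ w = j) ∧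
    (∀ σ : V → Fin t,
      (∀ a b, a ∉ Vs → b ∉ Vs → H.Adj a b → σ a ≠ σ b) →
      (∀ j : Fin t, ∃ w, w ∉ Vs ∧ σ w = j) →
      ∃ vi ∈ Vs, ∀ j : Fin t, ∃ w, w ∉ Vs ∧ H.Adj vi w ∧ σ w = j) := by
  classical
  have hHcol : H.Colorable t := by
    rw [← SimpleGraph.chromaticNumber_le_iff_colorable, hchi]
  obtain ⟨C⟩ := hHcol
  have hc0 : ∀ a b, H.Adj a b → C a ≠ C b := fun a b h => C.valid h
  obtain ⟨j0, hj0⟩ := hclass C hc0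
  have hVsInd : ∀ a ∈ Vs, ∀ b ∈ Vs, ¬ H.Adj a b := by
    intro a ha b hb hab
    exact hc0 a b hab (((hj0 a).1 ha).trans ((hj0 b).1 hb).symm)
  -- upper bound coloring of G
  have hup : (H.induce {w : V | w ∉ Vs}).Colorable (t - 1) := by
    refine ⟨SimpleGraph.Coloring.mk
      (fun w => ⟨if (C w.1).1 < j0.1 then (C w.1).1 else (C w.1).1 - 1, ?_⟩) ?_⟩
    · have h2 : C w.1 ≠ j0 := fun h => w.2 ((hj0 w.1).2 h)
      have h2' : (C w.1).1 ≠ j0.1 := fun h => h2 (Fin.ext h)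
      have b1 := (C w.1).isLt; have b3 := j0.isLt
      split <;> omega
    · intro a b hab hEq
      have hab' : H.Adj a.1 b.1 := hab
      have h1 : (C a.1).1 ≠ (C b.1).1 := fun h => hc0 _ _ hab' (Fin.ext h)
      have h2 : (C a.1).1 ≠ j0.1 := fun h => a.2 ((hj0 a.1).2 (Fin.ext h))
      have h3 : (C b.1).1 ≠ j0.1 := fun h => b.2 ((hj0 b.1).2 (Fin.ext h))
      have e := congrArg Fin.val hEq
      simp only at e
      have b1 := (C a.1).isLt; have b2 := (C b.1).isLt; have b3 := j0.isLt
      split_ifs at e <;> omega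
  have hle : (H.induce {w : V | w ∉ Vs}).chromaticNumber ≤ ((t - 1 : ℕ) : ℕ∞) :=
    hup.chromaticNumber_le
  -- chromatic number of G
  have hchiG : (H.induce {w : V | w ∉ Vs}).chromaticNumber = ((t - 1 : ℕ) : ℕ∞) := by
    obtain ⟨n, hn⟩ := WithTop.ne_top_iff_exists.mp
      (ne_top_of_le_ne_top (WithTop.coe_ne_top) hle)
    have hcoln : (H.induce {w : V | w ∉ Vs}).Colorable n :=
      SimpleGraph.chromaticNumber_le_iff_colorable.mp (le_of_eq hn.symm)
    obtain ⟨D⟩ := hcoln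
    have hHn : H.Colorable (n + 1) := by
      refine ⟨SimpleGraph.Coloring.mk
        (fun w => if h : w ∈ Vs then Fin.last n else (D ⟨w, h⟩).castSucc) ?_⟩
      intro a b hab hEq
      by_cases ha : a ∈ Vs <;> by_cases hb : b ∈ Vs
      · exact hVsInd a ha b hb hab
      · rw [dif_pos ha, dif_neg hb] at hEq
        exact (Fin.castSucc_lt_last _).ne' hEq
      · rw [dif_neg ha, dif_pos hb] at hEq
        exact (Fin.castSucc_lt_last _).ne hEq
      · rw [dif_neg ha, dif_neg hb] at hEq
        have : (H.induce {w : V | w ∉ Vs}).Adj ⟨a, ha⟩ ⟨b, hb⟩ := hab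
        exact D.valid this (Fin.castSucc_injective _ hEq)
    have ht' : (t : ℕ∞) ≤ (n + 1 : ℕ) := hchi ▸ hHn.chromaticNumber_le
    have ht'' : t ≤ n + 1 := by exact_mod_cast ht'
    have : ((t - 1 : ℕ) : ℕ∞) ≤ (n : ℕ∞) := by exact_mod_cast Nat.sub_le_of_le_add ht''
    exact le_antisymm hle (hn ▸ this)
  refine ⟨hchiG, ?_, ?_⟩
  · -- part (i)
    rintro σ hσ vi hvi j ⟨w0, hw0, hw0j⟩
    by_contra hcon
    push_neg at hcon
    set emb : Fin (t - 1) → Fin t := fun x => ⟨x.1, by have := x.isLt; omega⟩ with hemb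
    have hembinj : Function.Injective emb := fun x y h => by
      have h' := congrArg Fin.val h
      exact Fin.ext h'
    set extra : Fin t := ⟨t - 1, by omega⟩ with hextra
    have hembne : ∀ x, emb x ≠ extra := by
      intro x h
      have := congrArg Fin.val h
      have := x.isLt
      simp [hemb, hextra] at *
      omega
    set c : V → Fin t := fun w => if w = vi then emb j else
      if w ∈ Vs then extra else emb (σ w) with hc
    have hcprop : ∀ a b, H.Adj a b → c a ≠ c b := by
      intro a b hab hEq
      by_cases ha : a ∈ Vs <;> by_cases hb : b ∈ Vs
      · exact hVsInd a ha b hb hab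
      · have hbvi : b ≠ vi := fun h => hb (h ▸ hvi)
        simp only [hc] at hEq
        by_cases hav : a = vi
        · rw [if_pos hav, if_neg hbvi, if_neg hb] at hEq
          exact hcon b hb (hav ▸ hab) (hembinj hEq).symm
        · rw [if_neg hav, if_pos ha, if_neg hbvi, if_neg hb] at hEq
          exact hembne (σ b) hEq.symm
      · have havi : a ≠ vi := fun h => ha (h ▸ hvi)
        simp only [hc] at hEq
        by_cases hbv : b = vi
        · rw [if_neg havi, if_neg ha, if_pos hbv] at hEq
          exact hcon a ha (hbv ▸ hab.symm) (hembinj hEq)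
        · rw [if_neg havi, if_neg ha, if_neg hbv, if_pos hb] at hEq
          exact hembne (σ a) hEq
      · have havi : a ≠ vi := fun h => ha (h ▸ hvi)
        have hbvi : b ≠ vi := fun h => hb (h ▸ hvi)
        simp only [hc] at hEq
        rw [if_neg havi, if_neg ha, if_neg hbvi, if_neg hb] at hEq
        exact hσ a b ha hb hab (hembinj hEq)
    obtain ⟨j', hj'⟩ := hclass c hcprop
    have h1 : c vi = j' := (hj' vi).1 hvi
    have h2 : c vi = emb j := if_pos rfl
    have hw0vi : w0 ≠ vi := fun h => hw0 (h ▸ hvi)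
    have h3 : c w0 = emb j := by rw [hc]; simp only [if_neg hw0vi, if_neg hw0, hw0j]
    exact hw0 ((hj' w0).2 (h3.trans (h2 ▸ h1)))
  · -- part (ii)
    intro σ hσ hsurj
    by_contra hcon
    push_neg at hcon
    choose jfun hjfun using hcon
    set c : V → Fin t := fun w => if h : w ∈ Vs then jfun w h else σ w with hc
    have hcprop : ∀ a b, H.Adj a b → c a ≠ c b := by
      intro a b hab hEq
      by_cases ha : a ∈ Vs <;> by_cases hb : b ∈ Vs
      · exact hVsInd a ha b hb hab
      · simp only [hc] at hEq; simp only [dif_pos ha, dif_neg hb] at hEq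
        exact hjfun a ha b hb hab hEq.symm
      · simp only [hc] at hEq; simp only [dif_neg ha, dif_pos hb] at hEq
        exact hjfun b hb a ha hab.symm hEq
      · simp only [hc] at hEq; simp only [dif_neg ha, dif_neg hb] at hEq
        exact hσ a b ha hb hab hEq
    obtain ⟨j', hj'⟩ := hclass c hcprop
    obtain ⟨w, hw, hwj⟩ := hsurj j'
    have : c w = j' := by rw [hc]; simp only [dif_neg hw, hwj]
    exact hw ((hj' w).2 this)
end

section
/- The graph G* is uniquely 3-colorable: it admits a proper 3-coloring, and every proper 3-coloring of G* induces the same partition of its vertex set into color classes, namely {v_1, v_4, v_7}, {v_2, v_5, v_8}, {v_3, v_6}. -/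
/-- The graph `G*` of Figure 1 of the paper: vertices `v₁, …, v₈` are modelled as
`0, …, 7 : Fin 8`, and the 13 edges are
`v₁v₂, v₁v₃, v₁v₅, v₂v₃, v₂v₄, v₃v₄, v₃v₈, v₄v₆, v₅v₆, v₅v₇, v₆v₇, v₆v₈, v₇v₈`. -/
def Gstar : SimpleGraph (Fin 8) :=
  SimpleGraph.fromRel (fun a b =>
    ((a, b) : Fin 8 × Fin 8) ∈
      ([(0, 1), (0, 2), (0, 4), (1, 2), (1, 3), (2, 3), (2, 7), (3, 5), (4, 5), (4, 6),
        (5, 6), (5, 7), (6, 7)] : List (Fin 8 × Fin 8)))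

instance : DecidableRel Gstar.Adj := fun a b =>
  decidable_of_iff _ (SimpleGraph.fromRel_adj _ a b).symm

lemma key9 : ∀ c0 c1 c2 c3 c4 c5 c6 c7 : Fin 3,
    c0 ≠ c1 → c0 ≠ c2 → c0 ≠ c4 → c1 ≠ c2 → c1 ≠ c3 → c2 ≠ c3 → c2 ≠ c7 →
    c3 ≠ c5 → c4 ≠ c5 → c4 ≠ c6 → c5 ≠ c6 → c5 ≠ c7 → c6 ≠ c7 →
    c3 = c0 ∧ c6 = c0 ∧ c4 = c1 ∧ c7 = c1 ∧ c5 = c2 := by decide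

/-- `G*` is uniquely 3-colorable: it has a proper 3-coloring, and every proper
3-coloring of `G*` has color classes `{v₁, v₄, v₇}`, `{v₂, v₅, v₈}`, `{v₃, v₆}`
(i.e. `{0, 3, 6}`, `{1, 4, 7}`, `{2, 5}` in our labelling). -/
theorem stmt6 :
    (∃ σ : Fin 8 → Fin 3, ∀ a b, Gstar.Adj a b → σ a ≠ σ b) ∧
    (∀ σ : Fin 8 → Fin 3, (∀ a b, Gstar.Adj a b → σ a ≠ σ b) →
      {w : Fin 8 | σ w = σ 0} = ({0, 3, 6} : Set (Fin 8)) ∧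
      {w : Fin 8 | σ w = σ 1} = ({1, 4, 7} : Set (Fin 8)) ∧
      {w : Fin 8 | σ w = σ 2} = ({2, 5} : Set (Fin 8))) := by
  constructor
  · refine ⟨![0, 1, 2, 0, 1, 2, 0, 1], ?_⟩
    intro a b hab
    fin_cases a <;> fin_cases b <;> revert hab <;> decide
  · intro σ h
    have e01 := h 0 1 (by decide)
    have e02 := h 0 2 (by decide)
    have e04 := h 0 4 (by decide)
    have e12 := h 1 2 (by decide)
    have e13 := h 1 3 (by decide)
    have e23 := h 2 3 (by decide)
    have e27 := h 2 7 (by decide)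
    have e35 := h 3 5 (by decide)
    have e45 := h 4 5 (by decide)
    have e46 := h 4 6 (by decide)
    have e56 := h 5 6 (by decide)
    have e57 := h 5 7 (by decide)
    have e67 := h 6 7 (by decide)
    obtain ⟨h3, h6, h4, h7, h5⟩ :=
      key9 (σ 0) (σ 1) (σ 2) (σ 3) (σ 4) (σ 5) (σ 6) (σ 7)
        e01 e02 e04 e12 e13 e23 e27 e35 e45 e46 e56 e57 e67
    refine ⟨?_, ?_, ?_⟩ <;> ext w <;> fin_cases w <;>
      simp_all [Set.mem_insert_iff, eq_comm, ne_eq]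
end

section
/- For every integer k ≥ 2, the coloring γ is a proper 3-coloring of the graph D_k. -/
/-- Vertices of the graph `D_k`: `u`, `v`, `z`, the vertices `x_1, …, x_k`
(`x i` models `x_{i+1}`), and the vertices `v_{1,i}` (`a i`) and `v_{2,i}` (`b i`)
for `1 ≤ i ≤ k−1` (`a i`, `b i` model `v_{1,i+1}`, `v_{2,i+1}`). -/
inductive DVert (k : ℕ) : Type
  | u : DVert k
  | v : DVert k
  | z : DVert k
  | x : Fin k → DVert k
  | a : Fin (k - 1) → DVert k
  | b : Fin (k - 1) → DVert k

/-- The edges of `D_k`: `uz`, `ux_k`, `vx_k`, `zx_1`, `z v_{1,i}` for all `i`, and for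
each `1 ≤ i ≤ k−1` the two triangles `{x_i, v_{1,i}, v_{2,i}}`,
`{x_{i+1}, v_{1,i}, v_{2,i}}`. -/
def DRel (k : ℕ) : DVert k → DVert k → Prop
  | .u, .z => True
  | .u, .x i => (i : ℕ) = k - 1
  | .v, .x i => (i : ℕ) = k - 1
  | .z, .x i => (i : ℕ) = 0
  | .z, .a _ => True
  | .x j, .a i => (j : ℕ) = (i : ℕ) ∨ (j : ℕ) = (i : ℕ) + 1
  | .x j, .b i => (j : ℕ) = (i : ℕ) ∨ (j : ℕ) = (i : ℕ) + 1
  | .a i, .b j => (i : ℕ) = (j : ℕ)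
  | _, _ => False

/-- The graph `D_k`. -/
def Dgraph (k : ℕ) : SimpleGraph (DVert k) := SimpleGraph.fromRel (DRel k)

/-- The coloring `γ` of `D_k`: colors `1, 2, 3` are modelled as `0, 1, 2 : Fin 3`;
`γ(u) = 3`, `γ(v) = 1`, `γ(z) = 1`, `γ(xᵢ) = 2`, `γ(v_{1,i}) = 3`, `γ(v_{2,i}) = 1`. -/
def γD (k : ℕ) : DVert k → Fin 3
  | .u => 2
  | .v => 0
  | .z => 0
  | .x _ => 1
  | .a _ => 2
  | .b _ => 0

/-- For every `k ≥ 2`, `γ` is a proper 3-coloring of `D_k`. -/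
theorem stmt9 (k : ℕ) (hk : 2 ≤ k) :
    ∀ p q, (Dgraph k).Adj p q → γD k p ≠ γD k q := by
  intro p q h
  obtain ⟨hne, h | h⟩ := h <;> cases p <;> cases q <;>
    simp_all [DRel, γD] <;> decide
end

section
/- For every integer k ≥ 2 and any two distinct colors a, b ∈ {1,2,3}, there is exactly one proper 3-coloring σ of the graph D_k with σ(u) = a and σ(v) = b; in particular, γ is the unique proper 3-coloring of D_k with σ(u) = 3 and σ(v) = 1. -/
/-- The unique coloring with `σ u = ca`, `σ v = cb`. -/
def σ0 (k : ℕ) (ca cb : Fin 3) : DVert k → Fin 3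
  | .u => ca
  | .v => cb
  | .z => cb
  | .x _ => -(ca + cb)
  | .a _ => ca
  | .b _ => cb

lemma fin3_aux : ∀ ca cb : Fin 3, ca ≠ cb →
    -(ca + cb) ≠ ca ∧ -(ca + cb) ≠ cb ∧
    (∀ s : Fin 3, s ≠ ca → s ≠ -(ca + cb) → s = cb) ∧
    (∀ s : Fin 3, s ≠ cb → s ≠ -(ca + cb) → s = ca) ∧
    (∀ s : Fin 3, s ≠ ca → s ≠ cb → s = -(ca + cb)) := by decide

lemma fin3_pigeon : ∀ p q r s : Fin 3, p ≠ q ∧ p ≠ r ∧ q ≠ r ∧ s ≠ q ∧ s ≠ r → s = p := by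
  decide

lemma sigma0_proper (k : ℕ) (ca cb : Fin 3) (hab : ca ≠ cb) :
    ∀ p q, (Dgraph k).Adj p q → σ0 k ca cb p ≠ σ0 k ca cb q := by
  obtain ⟨hc1, hc2, -, -, -⟩ := fin3_aux ca cb hab
  intro p q hpq
  rw [Dgraph, SimpleGraph.fromRel_adj] at hpq
  obtain ⟨hne, h | h⟩ := hpq <;>
    cases p <;> cases q <;> simp only [DRel] at h <;> simp only [σ0] <;>
    first
      | exact hab | exact hab.symm | exact hc1 | exact hc1.symm
      | exact hc2 | exact hc2.symm | exact absurd rfl hne | exact h.elim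

/-- For every `k ≥ 2` and any two distinct colors `a, b`, there is exactly one proper
3-coloring `σ` of `D_k` with `σ(u) = a` and `σ(v) = b`; in particular `γ` is the unique
proper 3-coloring with `σ(u) = 3` and `σ(v) = 1` (i.e. `2` and `0 : Fin 3`). -/
theorem stmt10 (k : ℕ) (hk : 2 ≤ k) :
    (∀ ca cb : Fin 3, ca ≠ cb →
      ∃! σ : DVert k → Fin 3,
        (∀ p q, (Dgraph k).Adj p q → σ p ≠ σ q) ∧ σ .u = ca ∧ σ .v = cb) ∧
    (∀ σ : DVert k → Fin 3, (∀ p q, (Dgraph k).Adj p q → σ p ≠ σ q) →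
      σ .u = 2 → σ .v = 0 → σ = γD k) := by
  have main : ∀ ca cb : Fin 3, ca ≠ cb →
      ∃! σ : DVert k → Fin 3,
        (∀ p q, (Dgraph k).Adj p q → σ p ≠ σ q) ∧ σ .u = ca ∧ σ .v = cb := by
    intro ca cb hab
    obtain ⟨hc1, hc2, h3, h4, h5⟩ := fin3_aux ca cb hab
    refine ⟨σ0 k ca cb, ⟨sigma0_proper k ca cb hab, rfl, rfl⟩, ?_⟩
    · intro σ ⟨hp, hu, hv⟩
      have hadj : ∀ p q, DRel k p q → p ≠ q → σ p ≠ σ q := fun p q h hne =>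
        hp p q (by rw [Dgraph, SimpleGraph.fromRel_adj]; exact ⟨hne, Or.inl h⟩)
      have hk1 : 0 < k - 1 := by omega
      have hk0 : 0 < k := by omega
      -- bounds for i : Fin (k-1)
      have blt : ∀ i : Fin (k - 1), (i : ℕ) < k := fun i => by have := i.isLt; omega
      have blt' : ∀ i : Fin (k - 1), (i : ℕ) + 1 < k := fun i => by have := i.isLt; omega
      -- triangle adjacencies
      have hxa : ∀ i : Fin (k - 1), σ (.x ⟨i, blt i⟩) ≠ σ (.a i) := fun i =>
        hadj _ _ (Or.inl rfl) (by intro h; cases h)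
      have hxb : ∀ i : Fin (k - 1), σ (.x ⟨i, blt i⟩) ≠ σ (.b i) := fun i =>
        hadj _ _ (Or.inl rfl) (by intro h; cases h)
      have hxa' : ∀ i : Fin (k - 1), σ (.x ⟨(i : ℕ) + 1, blt' i⟩) ≠ σ (.a i) := fun i =>
        hadj _ _ (Or.inr rfl) (by intro h; cases h)
      have hxb' : ∀ i : Fin (k - 1), σ (.x ⟨(i : ℕ) + 1, blt' i⟩) ≠ σ (.b i) := fun i =>
        hadj _ _ (Or.inr rfl) (by intro h; cases h)
      have hab' : ∀ i : Fin (k - 1), σ (.a i) ≠ σ (.b i) := fun i =>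
        hadj _ _ rfl (by intro h; cases h)
      -- all x's have the same color
      have hchain : ∀ n (h : n < k), σ (.x ⟨n, h⟩) = σ (.x ⟨0, hk0⟩) := by
        intro n
        induction n with
        | zero => intro h; rfl
        | succ m ih =>
          intro h
          have hm : m < k - 1 := by omega
          have e1 : σ (.x ⟨m + 1, h⟩) = σ (.x ⟨m, by omega⟩) := by
            have := fin3_pigeon (σ (.x ⟨m, blt ⟨m, hm⟩⟩)) (σ (.a ⟨m, hm⟩)) (σ (.b ⟨m, hm⟩))
              (σ (.x ⟨m + 1, h⟩)) ⟨hxa ⟨m, hm⟩, hxb ⟨m, hm⟩, hab' ⟨m, hm⟩,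
              hxa' ⟨m, hm⟩, hxb' ⟨m, hm⟩⟩
            exact this
          rw [e1, ih]
      -- key adjacencies at the ends
      have hk1lt : k - 1 < k := by omega
      have hux : σ .u ≠ σ (.x ⟨k - 1, hk1lt⟩) :=
        hadj _ _ rfl (by intro h; cases h)
      have hvx : σ .v ≠ σ (.x ⟨k - 1, hk1lt⟩) :=
        hadj _ _ rfl (by intro h; cases h)
      have hxc : σ (.x ⟨0, hk0⟩) = -(ca + cb) := by
        rw [← hchain (k - 1) hk1lt]
        exact h5 _ (fun e => hux (hu.trans e.symm)) (fun e => hvx (hv.trans e.symm))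
      have hxall : ∀ i : Fin k, σ (.x i) = -(ca + cb) := by
        intro i
        have := hchain i i.isLt
        rw [Fin.eta] at this
        rw [this, hxc]
      have huz : σ .u ≠ σ .z := hadj _ _ trivial (by intro h; cases h)
      have hzx : σ .z ≠ σ (.x ⟨0, hk0⟩) :=
        hadj _ _ rfl (by intro h; cases h)
      have hz : σ .z = cb := by
        refine h3 _ (fun e => huz (hu.trans e.symm)) ?_
        rw [← hxc]; exact hzx
      have hza : ∀ i : Fin (k - 1), σ .z ≠ σ (.a i) := fun i =>
        hadj _ _ trivial (by intro h; cases h)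
      have ha : ∀ i : Fin (k - 1), σ (.a i) = ca := by
        intro i
        refine h4 _ (fun e => hza i (hz.trans e.symm)) ?_
        intro e
        exact hxa i (by rw [hxall, e])
      have hb : ∀ i : Fin (k - 1), σ (.b i) = cb := by
        intro i
        refine h3 _ ?_ ?_
        · intro e; exact hab' i (by rw [ha i, e])
        · intro e; exact hxb i (by rw [hxall, e])
      funext p
      cases p with
      | u => exact hu
      | v => exact hv
      | z => exact hz
      | x i => exact hxall i
      | a i => exact ha i
      | b i => exact hb i
  refine ⟨main, ?_⟩
  intro σ hp hu hv
  have h20 : (2 : Fin 3) ≠ 0 := by decide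
  have hγ : γD k = σ0 k 2 0 := by
    funext p; cases p <;> rfl
  exact (main 2 0 h20).unique ⟨hp, hu, hv⟩
    ⟨by rw [hγ]; exact sigma0_proper k 2 0 h20, rfl, rfl⟩
end
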